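/- arXiv:1602.06940 — 2 statements merged into one kernel-verified Lean document; each statement's English description precedes it below -/
import Mathlib

section
/- In the two-agent manipulation setting, a report ≻₁' of agent 1 is a best response with respect to some additive utility consistent with ≻₁ if and only if it is a best response with respect to every additive utility consistent with ≻₁. -/
/-- Sequential allocation: process the picking sequence in order; at each step the
agent whose turn it is receives his most-preferred (earliest in his ranking list)
item among those not yet allocated. Returns each agent's allocation. -/
def seqAlloc {A I : Type*} [DecidableEq A] [DecidableEq I]
    (prefs : A → List I) : List A → Finset I → A → Finset I
  | [], _ => fun _ => ∅
  | a :: rest, rem =>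
    match (prefs a).find? (fun o => decide (o ∈ rem)) with
    | none => seqAlloc prefs rest rem
    | some o => fun j =>
        if j = a then insert o (seqAlloc prefs rest (rem.erase o) j)
        else seqAlloc prefs rest (rem.erase o) j

/-- A report (strict linear order) over the item set `O`, given as a ranking list:
most preferred item first. -/
def IsReport {I : Type*} [DecidableEq I] (O : Finset I) (p : List I) : Prop :=
  p.Nodup ∧ ∀ o, o ∈ p ↔ o ∈ O

/-- Two-agent sequential allocation: agent `0` ("agent 1") reports `p1`,
agent `1` ("agent 2") reports `p2`. -/
def alloc2 {I : Type*} [DecidableEq I] (p1 p2 : List I)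
    (π : List (Fin 2)) (O : Finset I) : Fin 2 → Finset I :=
  seqAlloc (fun a => if a = 0 then p1 else p2) π O

/-- `S` is achievable by agent 1: some report gives agent 1 an allocation including `S`. -/
def Achievable {I : Type*} [DecidableEq I] (p2 : List I) (π : List (Fin 2))
    (O : Finset I) (S : Finset I) : Prop :=
  ∃ p1, IsReport O p1 ∧ S ⊆ alloc2 p1 p2 π O 0

/-- `o` is strictly preferred to `o'` in the ranking list `p`. -/
def Prefers {I : Type*} [DecidableEq I] (p : List I) (o o' : I) : Prop :=
  p.idxOf o < p.idxOf o'

instance {I : Type*} [DecidableEq I] (p : List I) (o o' : I) : Decidable (Prefers p o o') :=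
  inferInstanceAs (Decidable (_ < _))

/-- `u` is an additive utility consistent with the ranking `p` on item set `O`. -/
def Consistent {I : Type*} [DecidableEq I] (O : Finset I) (p : List I) (u : I → ℝ) : Prop :=
  (∀ o ∈ O, 0 < u o) ∧ ∀ o ∈ O, ∀ o' ∈ O, u o' < u o ↔ Prefers p o o'

namespace SAux
set_option linter.unusedSectionVars false
variable {α : Type*} [DecidableEq α]

lemma find?_eq_head?_filter (p : α → Bool) (l : List α) :
    l.find? p = (l.filter p).head? := by
  induction l with
  | nil => rfl
  | cons a tl ih =>
    by_cases h : p a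
    · rw [List.find?_cons_of_pos h, List.filter_cons_of_pos h]; rfl
    · rw [List.find?_cons_of_neg (by simpa using h),
        List.filter_cons_of_neg (by simpa using h), ih]

lemma mem_take_iff_indexOf_lt {l : List α} {a : α} (ha : a ∈ l) (k : ℕ) :
    a ∈ l.take k ↔ l.idxOf a < k := by
  induction l generalizing k with
  | nil => simp at ha
  | cons b tl ih =>
    rcases k with _ | k
    · simp
    · by_cases hba : b = a
      · subst hba; simp [List.idxOf_cons_self]
      · have ha' : a ∈ tl := by
          rcases List.mem_cons.1 ha with h | h
          · exact absurd h.symm hba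
          · exact h
        rw [List.take_succ_cons]
        simp only [List.mem_cons]
        have : ¬ a = b := fun h => hba h.symm
        rw [List.idxOf_cons_ne _ hba]
        rw [ih ha']
        constructor
        · rintro (h | h)
          · exact absurd h this
          · omega
        · intro h; right; omega

lemma take_erase_of_mem_take {l : List α} (hn : l.Nodup) {c : α} {k : ℕ}
    (hc : c ∈ l.take (k+1)) :
    ((l.erase c).take k).toFinset = ((l.take (k+1)).toFinset).erase c := by
  induction l generalizing k with
  | nil => simp at hc
  | cons a tl ih =>
    have hna : a ∉ tl := (List.nodup_cons.1 hn).1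
    by_cases hca : c = a
    · subst hca
      rw [List.erase_cons_head, List.take_succ_cons]
      simp only [List.toFinset_cons]
      rw [Finset.erase_insert]
      intro hmem
      exact hna (List.mem_of_mem_take (List.mem_toFinset.1 hmem))
    · have hc' : c ∈ tl.take k := by
        rw [List.take_succ_cons] at hc
        rcases List.mem_cons.1 hc with h | h
        · exact absurd h hca
        · exact h
      rcases k with _ | k
      · simp at hc'
      · rw [List.erase_cons_tail (by simp [Ne.symm hca] : ¬ (a == c))]
        rw [List.take_succ_cons, List.take_succ_cons]
        simp only [List.toFinset_cons]
        rw [ih (List.nodup_cons.1 hn).2 hc']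
        rw [Finset.erase_insert_of_ne (Ne.symm hca)]

lemma take_erase_subset (l : List α) (c : α) (k : ℕ) :
    ((l.erase c).take k).toFinset ⊆ ((l.take (k+1)).toFinset) := by
  induction l generalizing k with
  | nil => simp
  | cons a tl ih =>
    by_cases hca : c = a
    · subst hca
      rw [List.erase_cons_head, List.take_succ_cons]
      simp only [List.toFinset_cons]
      exact fun x hx => Finset.mem_insert_of_mem hx
    · rw [List.erase_cons_tail (by simp [Ne.symm hca] : ¬ (a == c))]
      rcases k with _ | k
      · simp
      · rw [List.take_succ_cons, List.take_succ_cons]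
        simp only [List.toFinset_cons]
        exact Finset.insert_subset_insert _ (ih k)

lemma erase_take_of_not_mem {l : List α} {c : α} {k : ℕ} (hc : c ∉ l.take k) :
    (l.erase c).take k = l.take k := by
  induction l generalizing k with
  | nil => simp
  | cons a tl ih =>
    rcases k with _ | k
    · simp
    · rw [List.take_succ_cons] at hc
      have hca : ¬ c = a := fun h => hc (by rw [h]; exact List.mem_cons_self)
      have hc' : c ∉ tl.take k := fun h => hc (List.mem_cons_of_mem _ h)
      rw [List.erase_cons_tail (by simp; exact fun h => hca h.symm : ¬ (a == c))]
      rw [List.take_succ_cons, List.take_succ_cons, ih hc']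

end SAux

namespace SAux
variable {I : Type*} [DecidableEq I]

lemma alloc2_nil (q p2 : List I) (rem : Finset I) (j : Fin 2) :
    alloc2 q p2 [] rem j = ∅ := rfl

lemma alloc2_cons0 {q p2 : List I} {rem : Finset I} {o : I} {rest : List (Fin 2)}
    (h : q.find? (fun o => decide (o ∈ rem)) = some o) :
    alloc2 q p2 ((0 : Fin 2) :: rest) rem 0 = insert o (alloc2 q p2 rest (rem.erase o) 0) := by
  unfold alloc2
  rw [seqAlloc]
  simp only [if_true]
  rw [h]
  simp

lemma alloc2_cons1 {q p2 : List I} {rem : Finset I} {o : I} {rest : List (Fin 2)}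
    (h : p2.find? (fun o => decide (o ∈ rem)) = some o) :
    alloc2 q p2 ((1 : Fin 2) :: rest) rem 0 = alloc2 q p2 rest (rem.erase o) 0 := by
  unfold alloc2
  rw [seqAlloc]
  simp only [show ((1:Fin 2) = 0) = False by decide, if_false]
  rw [h]
  simp [show ((0:Fin 2) = 1) = False by decide]

lemma find_some {O : Finset I} {p : List I} (hp : IsReport O p) {rem : Finset I}
    (hsub : rem ⊆ O) (hne : rem.Nonempty) :
    ∃ o, p.find? (fun o => decide (o ∈ rem)) = some o ∧ o ∈ rem := by
  obtain ⟨x, hx⟩ := hne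
  have hxp : x ∈ p := (hp.2 x).2 (hsub hx)
  have hs : (p.find? (fun o => decide (o ∈ rem))).isSome :=
    List.find?_isSome.2 ⟨x, hxp, by simpa using hx⟩
  obtain ⟨o, ho⟩ := Option.isSome_iff_exists.1 hs
  exact ⟨o, ho, by simpa using List.find?_some ho⟩

end SAux

section
variable {I : Type*} [DecidableEq I]

def zcount (π : List (Fin 2)) (k : ℕ) : ℕ := (π.take k).count 0

lemma zcount_zero (π : List (Fin 2)) : zcount π 0 = 0 := rfl

lemma zcount_cons0 (rest : List (Fin 2)) (k : ℕ) :
    zcount ((0:Fin 2) :: rest) (k+1) = zcount rest k + 1 := by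
  simp [zcount, List.take_succ_cons, List.count_cons]

lemma zcount_cons1 (rest : List (Fin 2)) (k : ℕ) :
    zcount ((1:Fin 2) :: rest) (k+1) = zcount rest k := by
  simp [zcount, List.take_succ_cons, List.count_cons]

lemma zcount_succ_le (π : List (Fin 2)) (k : ℕ) :
    zcount π (k+1) ≤ zcount π k + 1 := by
  rw [zcount, zcount, List.take_succ, List.count_append]
  have : (π[k]?.toList).count 0 ≤ 1 := by
    rcases h : π[k]? with _ | a <;> simp [List.count_cons] <;> split <;> simp
  omega

lemma zcount_mono (π : List (Fin 2)) {k k' : ℕ} (h : k ≤ k') :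
    zcount π k ≤ zcount π k' := by
  have hsub : (π.take k).Sublist (π.take k') := by
    have : π.take k = (π.take k').take k := by rw [List.take_take, min_eq_left h]
    rw [this]
    exact List.take_sublist _ _
  exact hsub.count_le 0

lemma zcount_of_le (π : List (Fin 2)) {k : ℕ} (h : π.length ≤ k) :
    zcount π k = π.count 0 := by
  rw [zcount, List.take_of_length_le h]

def FeasRel (p2 : List I) (π : List (Fin 2)) (rem S : Finset I) : Prop :=
  ∀ k, (S ∩ ((p2.filter (fun o => decide (o ∈ rem))).take k).toFinset).card ≤ zcount π k

lemma filter_erase {p2 : List I} (hn : p2.Nodup) (rem : Finset I) (c : I) :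
    p2.filter (fun o => decide (o ∈ rem.erase c)) =
      (p2.filter (fun o => decide (o ∈ rem))).erase c := by
  rw [List.Nodup.erase_eq_filter (hn.filter _) c, List.filter_filter]
  apply List.filter_congr
  intro x hx
  by_cases h1 : x ∈ rem <;> by_cases h2 : x = c <;> simp [Finset.mem_erase, h1, h2]

lemma inter_erase_of_not_mem {A P : Finset I} {o : I} (h : o ∉ A) :
    A ∩ P.erase o = A ∩ P := by
  ext x
  simp only [Finset.mem_inter, Finset.mem_erase]
  exact ⟨fun ⟨hA, _, hP⟩ => ⟨hA, hP⟩, fun ⟨hA, hP⟩ => ⟨hA, fun he => h (he ▸ hA), hP⟩⟩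

end


section
variable {I : Type*} [DecidableEq I]
open SAux

lemma sound (O : Finset I) (p2 : List I) (hp2 : IsReport O p2)
    (q : List I) (hq : IsReport O q) :
    ∀ (π : List (Fin 2)) (rem : Finset I), rem ⊆ O → π.length ≤ rem.card →
      alloc2 q p2 π rem 0 ⊆ rem ∧ (alloc2 q p2 π rem 0).card = π.count 0 ∧
        FeasRel p2 π rem (alloc2 q p2 π rem 0) := by
  intro π
  induction π with
  | nil =>
    intro rem _ _
    refine ⟨by simp [alloc2_nil], by simp [alloc2_nil], fun k => by simp [alloc2_nil, zcount]⟩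
  | cons a rest ih =>
    intro rem hsub hlen
    rw [List.length_cons] at hlen
    have hne : rem.Nonempty := Finset.card_pos.1 (by omega)
    fin_cases a <;> simp only [Fin.mk_zero, Fin.mk_one, Fin.isValue, id]
    · -- agent 0's turn
      obtain ⟨o, hfind, ho⟩ := find_some hq hsub hne
      rw [alloc2_cons0 (p2 := p2) (rest := rest) hfind]
      obtain ⟨ih1, ih2, ih3⟩ := ih (rem.erase o)
        (fun x hx => hsub (Finset.mem_of_mem_erase hx))
        (by rw [Finset.card_erase_of_mem ho]; omega)
      have hoA : o ∉ alloc2 q p2 rest (rem.erase o) 0 :=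
        fun h => (Finset.mem_erase.1 (ih1 h)).1 rfl
      set A0 := alloc2 q p2 rest (rem.erase o) 0 with hA0
      refine ⟨?_, ?_, ?_⟩
      · intro x hx
        rcases Finset.mem_insert.1 hx with h | h
        · exact h ▸ ho
        · exact Finset.mem_of_mem_erase (ih1 h)
      · rw [Finset.card_insert_of_notMem hoA, ih2]
        simp [List.count_cons]
      · intro k
        rcases k with _ | k
        · simp [zcount_zero]
        · rw [zcount_cons0]
          have hFn : (p2.filter (fun o' => decide (o' ∈ rem))).Nodup := hp2.1.filter _
          have hF' : p2.filter (fun o' => decide (o' ∈ rem.erase o)) =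
              (p2.filter (fun o' => decide (o' ∈ rem))).erase o := filter_erase hp2.1 rem o
          set F := p2.filter (fun o' => decide (o' ∈ rem)) with hF
          by_cases hmem : o ∈ F.take (k+1)
          · have hEq := take_erase_of_mem_take hFn hmem
            have h1 : insert o A0 ∩ (F.take (k+1)).toFinset
                = insert o (A0 ∩ (F.take (k+1)).toFinset) :=
              Finset.insert_inter_of_mem (List.mem_toFinset.2 hmem)
            rw [h1, Finset.card_insert_of_notMem (fun hc => hoA (Finset.mem_inter.1 hc).1)]
            have h2 : A0 ∩ (F.take (k+1)).toFinset = A0 ∩ ((F.erase o).take k).toFinset := by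
              rw [hEq, inter_erase_of_not_mem hoA]
            rw [h2]
            have := ih3 k
            rw [hF'] at this
            omega
          · have hEq : (F.erase o).take (k+1) = F.take (k+1) := erase_take_of_not_mem hmem
            have h1 : insert o A0 ∩ (F.take (k+1)).toFinset = A0 ∩ (F.take (k+1)).toFinset :=
              Finset.insert_inter_of_notMem (by simpa using hmem)
            rw [h1, ← hEq]
            have := ih3 (k+1)
            rw [hF'] at this
            have h3 := zcount_succ_le rest k
            omega
    · -- agent 2's turn
      obtain ⟨o, hfind, ho⟩ := find_some hp2 hsub hne
      rw [alloc2_cons1 (q := q) (rest := rest) hfind]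
      obtain ⟨ih1, ih2, ih3⟩ := ih (rem.erase o)
        (fun x hx => hsub (Finset.mem_of_mem_erase hx))
        (by rw [Finset.card_erase_of_mem ho]; omega)
      have hoA : o ∉ alloc2 q p2 rest (rem.erase o) 0 :=
        fun h => (Finset.mem_erase.1 (ih1 h)).1 rfl
      set A0 := alloc2 q p2 rest (rem.erase o) 0 with hA0
      have hFn : (p2.filter (fun o' => decide (o' ∈ rem))).Nodup := hp2.1.filter _
      have hF' : p2.filter (fun o' => decide (o' ∈ rem.erase o)) =
          (p2.filter (fun o' => decide (o' ∈ rem))).erase o := filter_erase hp2.1 rem o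
      set F := p2.filter (fun o' => decide (o' ∈ rem)) with hF
      have hhead : F.head? = some o := by
        rw [← find?_eq_head?_filter]; exact hfind
      have homem : ∀ k : ℕ, o ∈ F.take (k+1) := by
        intro k
        rcases F with _ | ⟨x, tl⟩
        · simp at hhead
        · simp only [List.head?_cons, Option.some.injEq] at hhead
          rw [List.take_succ_cons, hhead]
          exact List.mem_cons_self
      refine ⟨fun x hx => Finset.mem_of_mem_erase (ih1 hx), by rw [ih2]; simp [List.count_cons], ?_⟩
      intro k
      rcases k with _ | k
      · simp [zcount_zero]
      · rw [zcount_cons1]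
        have hEq := take_erase_of_mem_take hFn (homem k)
        rw [← inter_erase_of_not_mem (P := (F.take (k+1)).toFinset) hoA, ← hEq]
        have := ih3 k
        rw [hF'] at this
        exact this
end

section
variable {I : Type*} [DecidableEq I]
open SAux

lemma head_filter_mem_take {α : Type*} {F : List α} {p : α → Bool} {n : ℕ} {t : α}
    (ht : t ∈ F.take n) (hpt : p t) :
    ∃ h, (F.filter p).head? = some h ∧ h ∈ F.take n := by
  induction F generalizing n with
  | nil => simp at ht
  | cons a tl ih =>
    rcases n with _ | n
    · simp at ht
    · by_cases hpa : p a
      · exact ⟨a, by rw [List.filter_cons_of_pos hpa]; rfl,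
          by rw [List.take_succ_cons]; exact List.mem_cons_self⟩
      · rw [List.take_succ_cons] at ht
        have hta : t ∈ tl.take n := by
          rcases List.mem_cons.1 ht with h | h
          · exact absurd (h ▸ hpt) (by simpa using hpa)
          · exact h
        obtain ⟨h, h1, h2⟩ := ih hta
        exact ⟨h, by rw [List.filter_cons_of_neg (by simpa using hpa)]; exact h1,
          by rw [List.take_succ_cons]; exact List.mem_cons_of_mem _ h2⟩

lemma filter_inter_eq (p2 : List I) (A B : Finset I) :
    (p2.filter (fun o => decide (o ∈ A))).filter (fun o => decide (o ∈ B)) =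
      p2.filter (fun o => decide (o ∈ A ∩ B)) := by
  rw [List.filter_filter]
  apply List.filter_congr
  intro x _
  by_cases h1 : x ∈ A <;> by_cases h2 : x ∈ B <;> simp [h1, h2]

lemma inter_erase_right (A B : Finset I) (c : I) :
    A ∩ B.erase c = (A ∩ B).erase c := by
  ext x; simp only [Finset.mem_inter, Finset.mem_erase]; tauto

lemma complete (O : Finset I) (p2 : List I) (hp2 : IsReport O p2) (S0 : Finset I) :
    ∀ (π : List (Fin 2)) (rem : Finset I), rem ⊆ O → π.length ≤ rem.card →
      (S0 ∩ rem).card = π.count 0 → FeasRel p2 π rem (S0 ∩ rem) →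
      S0 ∩ rem ⊆ alloc2 (p2.filter (fun o => decide (o ∈ S0)) ++
        p2.filter (fun o => decide (o ∉ S0))) p2 π rem 0 := by
  intro π
  induction π with
  | nil =>
    intro rem _ _ hcard _
    have h0 : S0 ∩ rem = ∅ := Finset.card_eq_zero.1 (by simpa using hcard)
    rw [h0]
    exact Finset.empty_subset _
  | cons a rest ih =>
    intro rem hsub hlen hcard hfeas
    rw [List.length_cons] at hlen
    set qstar := p2.filter (fun o => decide (o ∈ S0)) ++ p2.filter (fun o => decide (o ∉ S0))
      with hqstar
    have hFn : (p2.filter (fun o' => decide (o' ∈ rem))).Nodup := hp2.1.filter _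
    have hF' : ∀ c, p2.filter (fun o' => decide (o' ∈ rem.erase c)) =
        (p2.filter (fun o' => decide (o' ∈ rem))).erase c := fun c => filter_erase hp2.1 rem c
    set F := p2.filter (fun o' => decide (o' ∈ rem)) with hFdef
    set T := S0 ∩ rem with hT
    fin_cases a <;> simp only [Fin.mk_zero, Fin.mk_one, Fin.isValue, id] at hcard hfeas ⊢
    · -- agent 0's turn
      have hTne : T.Nonempty := by
        rw [← Finset.card_pos, hcard]; simp [List.count_cons]
      -- the first item of qstar available in rem is the head of p2.filter (∈ S0 ∩ rem)
      have hFT : (p2.filter (fun o => decide (o ∈ S0))).filter (fun o => decide (o ∈ rem)) =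
          p2.filter (fun o => decide (o ∈ T)) := filter_inter_eq p2 S0 rem
      have hFTne : p2.filter (fun o => decide (o ∈ T)) ≠ [] := by
        obtain ⟨t, ht⟩ := hTne
        intro hnil
        have : t ∈ p2.filter (fun o => decide (o ∈ T)) :=
          List.mem_filter.2 ⟨(hp2.2 t).2 (hsub (Finset.mem_inter.1 ht).2), by simpa using ht⟩
        rw [hnil] at this; simp at this
      obtain ⟨s₁, tl, hFTeq⟩ : ∃ s₁ tl, p2.filter (fun o => decide (o ∈ T)) = s₁ :: tl := by
        rcases hh : p2.filter (fun o => decide (o ∈ T)) with _ | ⟨s₁, tl⟩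
        · exact absurd hh hFTne
        · exact ⟨s₁, tl, rfl⟩
      have hs₁T : s₁ ∈ T := by
        have : s₁ ∈ p2.filter (fun o => decide (o ∈ T)) := by rw [hFTeq]; exact List.mem_cons_self
        simpa using (List.mem_filter.1 this).2
      have hfind : qstar.find? (fun o => decide (o ∈ rem)) = some s₁ := by
        rw [hqstar, List.find?_append, find?_eq_head?_filter, hFT, hFTeq]
        rfl
      rw [alloc2_cons0 (p2 := p2) (rest := rest) hfind]
      have hrem' : S0 ∩ rem.erase s₁ = T.erase s₁ := inter_erase_right S0 rem s₁
      have hcard' : (S0 ∩ rem.erase s₁).card = rest.count 0 := by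
        rw [hrem', Finset.card_erase_of_mem hs₁T, hcard]
        simp [List.count_cons]
      have hfeas' : FeasRel p2 rest (rem.erase s₁) (S0 ∩ rem.erase s₁) := by
        rw [hrem']
        intro k
        rw [hF' s₁]
        by_cases hmem : s₁ ∈ F.take (k+1)
        · rw [take_erase_of_mem_take hFn hmem]
          have h2 : T.erase s₁ ∩ ((F.take (k+1)).toFinset.erase s₁)
              = (T ∩ (F.take (k+1)).toFinset).erase s₁ := by
            ext x; simp only [Finset.mem_inter, Finset.mem_erase]; tauto
          rw [h2, Finset.card_erase_of_mem
            (Finset.mem_inter.2 ⟨hs₁T, List.mem_toFinset.2 hmem⟩)]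
          have := hfeas (k+1)
          rw [zcount_cons0] at this
          rw [← hFdef] at this
          have hpos : 0 < (T ∩ (F.take (k+1)).toFinset).card :=
            Finset.card_pos.2 ⟨s₁, Finset.mem_inter.2 ⟨hs₁T, List.mem_toFinset.2 hmem⟩⟩
          omega
        · -- no element of T appears in F.take (k+1)
          have hempty : T ∩ (F.take (k+1)).toFinset = ∅ := by
            rw [Finset.eq_empty_iff_forall_notMem]
            rintro t ht
            obtain ⟨htT, htF⟩ := Finset.mem_inter.1 ht
            obtain ⟨h, hh1, hh2⟩ := head_filter_mem_take (p := fun o => decide (o ∈ T))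
              (List.mem_toFinset.1 htF) (by simpa using htT)
            have : F.filter (fun o => decide (o ∈ T)) = p2.filter (fun o => decide (o ∈ T)) := by
              rw [hFdef, filter_inter_eq]
              apply List.filter_congr
              intro x _
              simp only [decide_eq_decide, Finset.mem_inter, hT]
              tauto
            rw [this, hFTeq] at hh1
            simp only [List.head?_cons, Option.some.injEq] at hh1
            exact hmem (hh1 ▸ hh2)
          have hss : T.erase s₁ ∩ ((F.erase s₁).take k).toFinset ⊆
              T ∩ (F.take (k+1)).toFinset := by
            intro x hx
            obtain ⟨h1, h2⟩ := Finset.mem_inter.1 hx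
            exact Finset.mem_inter.2 ⟨Finset.mem_of_mem_erase h1, take_erase_subset F s₁ k h2⟩
          rw [hempty] at hss
          simp [Finset.subset_empty.1 hss]
      have hsubset' := ih (rem.erase s₁) (fun x hx => hsub (Finset.mem_of_mem_erase hx))
        (by rw [Finset.card_erase_of_mem ((Finset.mem_inter.1 hs₁T).2)]; omega) hcard' hfeas'
      rw [hrem'] at hsubset'
      intro t ht
      by_cases hts : t = s₁
      · exact hts ▸ Finset.mem_insert_self _ _
      · exact Finset.mem_insert_of_mem (hsubset' (Finset.mem_erase.2 ⟨hts, ht⟩))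
    · -- agent 2's turn
      have hne : rem.Nonempty := Finset.card_pos.1 (by omega)
      obtain ⟨o, hfind, ho⟩ := find_some hp2 hsub hne
      rw [alloc2_cons1 (q := qstar) (rest := rest) hfind]
      have hhead : F.head? = some o := by rw [← find?_eq_head?_filter]; exact hfind
      obtain ⟨tl, htl⟩ : ∃ tl, F = o :: tl := by
        rcases F with _ | ⟨x, tl⟩
        · simp at hhead
        · simp only [List.head?_cons, Option.some.injEq] at hhead
          exact ⟨tl, by rw [hhead]⟩
      have homem : ∀ k : ℕ, o ∈ F.take (k+1) := by
        intro k; rw [htl, List.take_succ_cons]; exact List.mem_cons_self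
      have hoT : o ∉ T := by
        have := hfeas 1
        rw [zcount_cons1, zcount_zero] at this
        rw [← hFdef] at this
        intro hoT
        have : o ∈ T ∩ (F.take 1).toFinset := Finset.mem_inter.2 ⟨hoT, List.mem_toFinset.2 (homem 0)⟩
        have hc := Finset.card_pos.2 ⟨o, this⟩
        omega
      have hrem' : S0 ∩ rem.erase o = T := by
        rw [inter_erase_right, Finset.erase_eq_of_notMem hoT]
      have hfeas' : FeasRel p2 rest (rem.erase o) (S0 ∩ rem.erase o) := by
        rw [hrem']
        intro k
        rw [hF' o, take_erase_of_mem_take hFn (homem k),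
          inter_erase_of_not_mem (P := (F.take (k+1)).toFinset) hoT]
        have := hfeas (k+1)
        rw [zcount_cons1] at this
        rw [← hFdef] at this
        exact this
      have := ih (rem.erase o) (fun x hx => hsub (Finset.mem_of_mem_erase hx))
        (by rw [Finset.card_erase_of_mem ho]; omega)
        (by rw [hrem', hcard]; simp [List.count_cons]) hfeas'
      rw [hrem'] at this
      exact this
end

section
variable {I : Type*} [DecidableEq I]
open SAux

def FeasTop (p2 : List I) (π : List (Fin 2)) (S : Finset I) : Prop :=
  ∀ k, (S ∩ (p2.take k).toFinset).card ≤ zcount π k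

lemma report_filter_eq {O : Finset I} {p2 : List I} (hp2 : IsReport O p2) :
    p2.filter (fun o => decide (o ∈ O)) = p2 :=
  List.filter_eq_self.2 fun a ha => by simpa using (hp2.2 a).1 ha

lemma report_toFinset {O : Finset I} {p2 : List I} (hp2 : IsReport O p2) :
    p2.toFinset = O := by
  ext x; rw [List.mem_toFinset]; exact hp2.2 x

lemma report_length {O : Finset I} {p2 : List I} (hp2 : IsReport O p2) :
    p2.length = O.card := by
  rw [← report_toFinset hp2, List.toFinset_card_of_nodup hp2.1]

lemma feasTop_iff {O : Finset I} {p2 : List I} (hp2 : IsReport O p2) (π : List (Fin 2))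
    (S : Finset I) : FeasRel p2 π O S ↔ FeasTop p2 π S := by
  unfold FeasRel FeasTop
  rw [report_filter_eq hp2]

lemma FeasTop.mono {p2 : List I} {π : List (Fin 2)} {S S' : Finset I}
    (h : S' ⊆ S) (hf : FeasTop p2 π S) : FeasTop p2 π S' := fun k =>
  le_trans (Finset.card_le_card (Finset.inter_subset_inter h (Finset.Subset.refl _))) (hf k)

def chk (p2 : List I) (π : List (Fin 2)) (S : Finset I) : Prop :=
  ∀ k ∈ Finset.range (p2.length + 1), (S ∩ (p2.take k).toFinset).card ≤ zcount π k

instance (p2 : List I) (π : List (Fin 2)) (S : Finset I) : Decidable (chk p2 π S) :=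
  Finset.decidableDforallFinset

lemma chk_iff {O : Finset I} {p2 : List I} (hp2 : IsReport O p2) {π : List (Fin 2)}
    (hπ : π.length = O.card) {S : Finset I} (hS : S ⊆ O) :
    chk p2 π S ↔ FeasTop p2 π S := by
  constructor
  · intro h k
    by_cases hk : k ≤ p2.length
    · exact h k (Finset.mem_range.2 (by omega))
    · have h1 : p2.take k = p2 := List.take_of_length_le (by omega)
      have h2 : p2.take p2.length = p2 := List.take_of_length_le le_rfl
      have h3 := h p2.length (Finset.mem_range.2 (by omega))
      rw [h2] at h3
      rw [h1]
      exact le_trans h3 (zcount_mono π (by omega))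
  · intro h k _
    exact h k

def greedyAux (p2 : List I) (π : List (Fin 2)) : List I → Finset I → Finset I
  | [], acc => acc
  | o :: rest, acc =>
    if chk p2 π (insert o acc) then greedyAux p2 π rest (insert o acc)
    else greedyAux p2 π rest acc

lemma greedy_acc_subset (p2 : List I) (π : List (Fin 2)) :
    ∀ (l : List I) (acc : Finset I), acc ⊆ greedyAux p2 π l acc := by
  intro l
  induction l with
  | nil => intro acc; rw [greedyAux]
  | cons o rest ih =>
    intro acc
    rw [greedyAux]
    split
    · exact (Finset.subset_insert o acc).trans (ih (insert o acc))
    · exact ih acc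

lemma greedy_subset_union (p2 : List I) (π : List (Fin 2)) :
    ∀ (l : List I) (acc : Finset I), greedyAux p2 π l acc ⊆ acc ∪ l.toFinset := by
  intro l
  induction l with
  | nil => intro acc; rw [greedyAux]; exact Finset.subset_union_left
  | cons o rest ih =>
    intro acc
    rw [greedyAux]
    have hsub : insert o acc ∪ rest.toFinset ⊆ acc ∪ (o :: rest).toFinset := by
      intro x hx
      simp only [Finset.mem_union, Finset.mem_insert, List.toFinset_cons] at hx ⊢
      tauto
    split
    · exact (ih (insert o acc)).trans hsub
    · refine (ih acc).trans ?_
      intro x hx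
      simp only [Finset.mem_union, List.toFinset_cons, Finset.mem_insert] at hx ⊢
      tauto
  
lemma greedy_chk (p2 : List I) (π : List (Fin 2)) :
    ∀ (l : List I) (acc : Finset I), chk p2 π acc → chk p2 π (greedyAux p2 π l acc) := by
  intro l
  induction l with
  | nil => intro acc h; rw [greedyAux]; exact h
  | cons o rest ih =>
    intro acc h
    rw [greedyAux]
    split
    · next hc => exact ih _ hc
    · exact ih _ h

lemma greedy_reject (p2 : List I) (π : List (Fin 2)) :
    ∀ (l : List I) (acc : Finset I), l.Nodup → (∀ x ∈ l, x ∉ acc) →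
      ∀ o ∈ l, o ∉ greedyAux p2 π l acc →
      ∃ B, B ⊆ greedyAux p2 π l acc ∧ B ⊆ acc ∪ (l.take (l.idxOf o)).toFinset ∧
        ¬ chk p2 π (insert o B) := by
  intro l
  induction l with
  | nil => intro acc _ _ o ho; simp at ho
  | cons a rest ih =>
    intro acc hnd hdisj o ho hno
    rw [greedyAux] at hno ⊢
    by_cases hc : chk p2 π (insert a acc)
    · rw [if_pos hc] at hno ⊢
      by_cases hoa : o = a
      · subst hoa
        exact absurd (greedy_acc_subset p2 π rest (insert o acc) (Finset.mem_insert_self o acc))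
          hno
      · have horest : o ∈ rest := by
          rcases List.mem_cons.1 ho with h | h
          · exact absurd h hoa
          · exact h
        have htake : ((a :: rest).take ((a :: rest).idxOf o)).toFinset =
            insert a ((rest.take (rest.idxOf o)).toFinset) := by
          rw [List.idxOf_cons_ne _ (fun h => hoa h.symm)]
          rw [show (rest.idxOf o).succ = rest.idxOf o + 1 from rfl]
          rw [List.take_succ_cons, List.toFinset_cons]
        obtain ⟨B, h1, h2, h3⟩ := ih (insert a acc) (List.nodup_cons.1 hnd).2
          (fun x hx hmem => by
            rcases Finset.mem_insert.1 hmem with h | h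
            · exact (List.nodup_cons.1 hnd).1 (h ▸ hx)
            · exact hdisj x (List.mem_cons_of_mem _ hx) h)
          o horest hno
        refine ⟨B, h1, ?_, h3⟩
        rw [htake]
        refine h2.trans ?_
        intro x hx
        simp only [Finset.mem_union, Finset.mem_insert] at hx ⊢
        tauto
    · rw [if_neg hc] at hno ⊢
      by_cases hoa : o = a
      · subst hoa
        exact ⟨acc, greedy_acc_subset p2 π rest acc, Finset.subset_union_left, hc⟩
      · have horest : o ∈ rest := by
          rcases List.mem_cons.1 ho with h | h
          · exact absurd h hoa
          · exact h
        have htake : ((a :: rest).take ((a :: rest).idxOf o)).toFinset =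
            insert a ((rest.take (rest.idxOf o)).toFinset) := by
          rw [List.idxOf_cons_ne _ (fun h => hoa h.symm)]
          rw [show (rest.idxOf o).succ = rest.idxOf o + 1 from rfl]
          rw [List.take_succ_cons, List.toFinset_cons]
        obtain ⟨B, h1, h2, h3⟩ := ih acc (List.nodup_cons.1 hnd).2
          (fun x hx hmem => hdisj x (List.mem_cons_of_mem _ hx) hmem) o horest hno
        refine ⟨B, h1, ?_, h3⟩
        rw [htake]
        refine h2.trans ?_
        intro x hx
        simp only [Finset.mem_union, Finset.mem_insert] at hx ⊢
        tauto
end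

section
variable {I : Type*} [DecidableEq I]
open SAux

lemma exchange {O : Finset I} {p2 : List I} (hp2 : IsReport O p2) {π : List (Fin 2)}
    (hπ : π.length = O.card) {S T : Finset I} (hS : S ⊆ O) (hT : T ⊆ O)
    (hfS : FeasTop p2 π S) (hfT : FeasTop p2 π T) (hcard : S.card < T.card) :
    ∃ o ∈ T, o ∉ S ∧ FeasTop p2 π (insert o S) := by
  classical
  set len := p2.length with hlen
  have hlenO : p2.length = O.card := report_length hp2
  have htF : p2.toFinset = O := report_toFinset hp2
  set P : ℕ → Finset I := fun k => (p2.take k).toFinset with hP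
  set tight : ℕ → Prop := fun k => (S ∩ P k).card = zcount π k with htight
  have htight0 : tight 0 := by simp [htight, hP, zcount_zero]
  set kstar := Nat.findGreatest tight len with hkstar
  have htightk : tight kstar := Nat.findGreatest_spec (Nat.zero_le len) htight0
  have hmaximal : ∀ k, kstar < k → k ≤ len → ¬ tight k := by
    intro k h1 h2
    exact Nat.findGreatest_is_greatest h1 h2
  have hSfull : S ∩ P len = S := by
    rw [hP]
    simp only [List.take_of_length_le (show p2.length ≤ len from le_rfl), htF]
    exact Finset.inter_eq_left.2 hS
  have hTfull : T ∩ P len = T := by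
    rw [hP]
    simp only [List.take_of_length_le (show p2.length ≤ len from le_rfl), htF]
    exact Finset.inter_eq_left.2 hT
  have hntlen : ¬ tight len := by
    intro ht
    rw [htight, hSfull] at ht
    have h2 := hfT len
    rw [hTfull] at h2
    omega
  -- find the exchanged element
  have htightk' : (S ∩ P kstar).card = zcount π kstar := htightk
  have hTk : (T ∩ P kstar).card ≤ zcount π kstar := hfT kstar
  have hScard : (S ∩ P kstar).card + (S \ P kstar).card = S.card :=
    Finset.card_inter_add_card_sdiff S (P kstar)
  have hTcard : (T ∩ P kstar).card + (T \ P kstar).card = T.card :=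
    Finset.card_inter_add_card_sdiff T (P kstar)
  have hlt : (S \ P kstar).card < (T \ P kstar).card := by omega
  obtain ⟨o, hoT, hoS⟩ : ∃ o ∈ T \ P kstar, o ∉ S \ P kstar := by
    by_contra h
    push_neg at h
    exact absurd (Finset.card_le_card h) (by omega)
  obtain ⟨hoT', hoP⟩ := Finset.mem_sdiff.1 hoT
  have hoSn : o ∉ S := fun h => hoS (Finset.mem_sdiff.2 ⟨h, hoP⟩)
  refine ⟨o, hoT', hoSn, ?_⟩
  intro k
  by_cases hoPk : o ∈ P k
  · -- k > kstar necessarily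
    have hkk : kstar < k := by
      by_contra h
      push_neg at h
      exact hoP (by
        rw [hP] at hoPk ⊢
        rw [List.mem_toFinset] at hoPk ⊢
        have : p2.take k = (p2.take kstar).take k := by
          rw [List.take_take, min_eq_left h]
        rw [this] at hoPk
        exact List.mem_of_mem_take hoPk)
    have heq : insert o S ∩ P k = insert o (S ∩ P k) := Finset.insert_inter_of_mem hoPk
    rw [heq, Finset.card_insert_of_notMem (fun hmem => hoSn (Finset.mem_inter.1 hmem).1)]
    have hlt2 : (S ∩ P k).card < zcount π k := by
      by_cases hk : k ≤ len
      · exact lt_of_le_of_ne (hfS k) (hmaximal k hkk hk)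
      · have h1 : P k = P len := by
          rw [hP]
          simp only
          rw [List.take_of_length_le (le_of_lt (by omega)), List.take_of_length_le le_rfl]
        have h2 : zcount π k = zcount π len := by
          rw [zcount_of_le π (by omega), zcount_of_le π (by rw [hπ, ← hlenO])]
        rw [h1, h2]
        refine lt_of_le_of_ne ?_ ?_
        · have := hfS len; exact this
        · exact hntlen
    omega
  · rw [Finset.insert_inter_of_notMem hoPk]
    exact hfS k
end

section
variable {I : Type*} [DecidableEq I]
open SAux

lemma take_toFinset_mono (l : List I) {i j : ℕ} (h : i ≤ j) :
    (l.take i).toFinset ⊆ (l.take j).toFinset := by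
  intro x hx
  rw [List.mem_toFinset] at hx ⊢
  have : l.take i = (l.take j).take i := by rw [List.take_take, min_eq_left h]
  rw [this] at hx
  exact List.mem_of_mem_take hx

lemma counting {O : Finset I} {p2 : List I} (hp2 : IsReport O p2) {π : List (Fin 2)}
    (hπ : π.length = O.card) {p1 : List I} (hp1 : IsReport O p1)
    {T : Finset I} (hT : T ⊆ O) (hfT : FeasTop p2 π T) :
    ∀ k, (T ∩ (p1.take k).toFinset).card ≤
      ((greedyAux p2 π p1 ∅) ∩ (p1.take k).toFinset).card := by
  classical
  set Sstar := greedyAux p2 π p1 ∅ with hSstar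
  have htF1 : p1.toFinset = O := report_toFinset hp1
  have hSsub : Sstar ⊆ O := by
    refine (greedy_subset_union p2 π p1 ∅).trans ?_
    rw [Finset.empty_union, htF1]
  have hchk0 : chk p2 π (∅ : Finset I) := by
    intro k _
    simp [zcount]
  have hchkS : chk p2 π Sstar := greedy_chk p2 π p1 ∅ hchk0
  have hfS : FeasTop p2 π Sstar := (chk_iff hp2 hπ hSsub).1 hchkS
  intro k
  induction k with
  | zero => simp
  | succ k ih =>
    by_cases hk : k < p1.length
    · have htk : p1.take (k+1) = p1.take k ++ [p1[k]] := by
        rw [List.take_succ, List.getElem?_eq_getElem hk]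
        rfl
      have hnd : (p1.take (k+1)).Nodup := hp1.1.sublist (List.take_sublist _ _)
      have hoknotin : p1[k] ∉ p1.take k := by
        rw [htk] at hnd
        have := List.disjoint_of_nodup_append hnd
        intro h
        exact this h (List.mem_singleton_self _)
      set ok := p1[k] with hok
      have hR' : (p1.take (k+1)).toFinset = insert ok ((p1.take k).toFinset) := by
        rw [htk]
        simp [List.toFinset_append]
      set R := (p1.take k).toFinset with hR
      rw [hR']
      have hoknotinR : ok ∉ R := fun h => hoknotin (List.mem_toFinset.1 h)
      by_cases hoT : ok ∈ T
      · by_cases hoS : ok ∈ Sstar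
        · have h1 : T ∩ insert ok R = insert ok (T ∩ R) := by
            ext x
            simp only [Finset.mem_inter, Finset.mem_insert]
            constructor
            · rintro ⟨hx, h | h⟩
              · exact Or.inl h
              · exact Or.inr ⟨hx, h⟩
            · rintro (h | ⟨h1, h2⟩)
              · exact ⟨h ▸ hoT, Or.inl h⟩
              · exact ⟨h1, Or.inr h2⟩
          have h2 : Sstar ∩ insert ok R = insert ok (Sstar ∩ R) := by
            ext x
            simp only [Finset.mem_inter, Finset.mem_insert]
            constructor
            · rintro ⟨hx, h | h⟩
              · exact Or.inl h
              · exact Or.inr ⟨hx, h⟩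
            · rintro (h | ⟨h1, h2⟩)
              · exact ⟨h ▸ hoS, Or.inl h⟩
              · exact ⟨h1, Or.inr h2⟩
          rw [h1, h2, Finset.card_insert_of_notMem (fun h => hoknotinR (Finset.mem_inter.1 h).2),
            Finset.card_insert_of_notMem (fun h => hoknotinR (Finset.mem_inter.1 h).2)]
          omega
        · -- the hard case: greedy rejected ok
          have h2 : Sstar ∩ insert ok R = Sstar ∩ R := by
            ext x
            simp only [Finset.mem_inter, Finset.mem_insert]
            constructor
            · rintro ⟨hx, h | h⟩
              · exact absurd (h ▸ hx) hoS
              · exact ⟨hx, h⟩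
            · rintro ⟨h1, h2⟩
              exact ⟨h1, Or.inr h2⟩
          rw [h2]
          by_contra hcon
          push_neg at hcon
          -- apply the exchange lemma to S₁ = Sstar ∩ insert ok R, T₁ = T ∩ insert ok R
          have hfS1 : FeasTop p2 π (Sstar ∩ insert ok R) :=
            FeasTop.mono Finset.inter_subset_left hfS
          have hfT1 : FeasTop p2 π (T ∩ insert ok R) :=
            FeasTop.mono Finset.inter_subset_left hfT
          obtain ⟨o, hoT1, hoS1, hfeas1⟩ := exchange hp2 hπ
            ((Finset.inter_subset_left).trans hSsub) ((Finset.inter_subset_left).trans hT)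
            hfS1 hfT1 (by rw [h2]; omega)
          have hoRk1 : o ∈ insert ok R := (Finset.mem_inter.1 hoT1).2
          have honotS : o ∉ Sstar := by
            intro h
            exact hoS1 (Finset.mem_inter.2 ⟨h, hoRk1⟩)
          have hop1 : o ∈ p1 := by
            have : o ∈ (p1.take (k+1)).toFinset := by rw [hR']; exact hoRk1
            exact List.mem_of_mem_take (List.mem_toFinset.1 this)
          obtain ⟨B, hB1, hB2, hB3⟩ := greedy_reject p2 π p1 ∅ hp1.1
            (fun x _ h => absurd h (Finset.notMem_empty x)) o hop1 honotS
          apply hB3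
          have hidx : p1.idxOf o ≤ k := by
            have : o ∈ p1.take (k+1) := by
              have : o ∈ (p1.take (k+1)).toFinset := by rw [hR']; exact hoRk1
              exact List.mem_toFinset.1 this
            have := (mem_take_iff_indexOf_lt hop1 (k+1)).1 this
            omega
          have hBsub : B ⊆ Sstar ∩ insert ok R := by
            intro x hx
            refine Finset.mem_inter.2 ⟨hB1 hx, ?_⟩
            have := hB2 hx
            rw [Finset.empty_union] at this
            exact Finset.mem_insert_of_mem
              ((take_toFinset_mono p1 hidx) this)
          have : insert o B ⊆ insert o (Sstar ∩ insert ok R) := Finset.insert_subset_insert _ hBsub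
          refine (chk_iff hp2 hπ ?_).2 (FeasTop.mono this hfeas1)
          intro x hx
          rcases Finset.mem_insert.1 hx with h | h
          · exact h ▸ (hT (Finset.mem_inter.1 hoT1).1)
          · exact hSsub (hB1 h)
      · have h1 : T ∩ insert ok R = T ∩ R := by
          ext x
          simp only [Finset.mem_inter, Finset.mem_insert]
          constructor
          · rintro ⟨hx, h | h⟩
            · exact absurd (h ▸ hx) hoT
            · exact ⟨hx, h⟩
          · rintro ⟨h1, h2⟩
            exact ⟨h1, Or.inr h2⟩
        rw [h1]
        refine le_trans ih (Finset.card_le_card ?_)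
        exact Finset.inter_subset_inter (Finset.Subset.refl _) (Finset.subset_insert _ _)
    · have h1 : p1.take (k+1) = p1.take k := by
        rw [List.take_of_length_le (by omega), List.take_of_length_le (by omega)]
      rw [h1]
      exact ih
end

section
variable {I : Type*} [DecidableEq I]
open SAux

lemma sum_dom {O : Finset I} {p1 : List I} (hp1 : IsReport O p1) {u : I → ℝ}
    (hu : Consistent O p1 u) :
    ∀ (n : ℕ) (S T : Finset I), (S ∪ T).card ≤ n → S ⊆ O → T ⊆ O →
      (∀ k, (T ∩ (p1.take k).toFinset).card ≤ (S ∩ (p1.take k).toFinset).card) →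
      (∑ o ∈ T, u o ≤ ∑ o ∈ S, u o) ∧ (T ≠ S → ∑ o ∈ T, u o < ∑ o ∈ S, u o) := by
  have htF1 : p1.toFinset = O := report_toFinset hp1
  have hmem : ∀ x ∈ O, x ∈ p1 := fun x hx => (hp1.2 x).2 hx
  intro n
  induction n with
  | zero =>
    intro S T hn _ _ _
    have h0 : S ∪ T = ∅ := Finset.card_eq_zero.1 (by omega)
    have hS : S = ∅ := Finset.union_eq_empty.1 h0 |>.1
    have hT : T = ∅ := Finset.union_eq_empty.1 h0 |>.2
    subst hS; subst hT
    exact ⟨le_refl _, fun h => absurd rfl h⟩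
  | succ n ih =>
    intro S T hn hSO hTO hcnt
    by_cases hempty : S ∪ T = ∅
    · have hS : S = ∅ := Finset.union_eq_empty.1 hempty |>.1
      have hT : T = ∅ := Finset.union_eq_empty.1 hempty |>.2
      subst hS; subst hT
      exact ⟨le_refl _, fun h => absurd rfl h⟩
    · obtain ⟨w, hwU, hwmax⟩ := Finset.exists_max_image (S ∪ T) (fun o => p1.idxOf o)
        (Finset.nonempty_of_ne_empty hempty)
      have hUO : S ∪ T ⊆ O := Finset.union_subset hSO hTO
      have hwO : w ∈ O := hUO hwU
      have hwp1 : w ∈ p1 := hmem w hwO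
      -- card comparison
      have hTcard : T.card ≤ S.card := by
        have := hcnt p1.length
        rw [List.take_of_length_le le_rfl, htF1, Finset.inter_eq_left.2 hTO,
          Finset.inter_eq_left.2 hSO] at this
        exact this
      have hmemtake : ∀ x (hx : x ∈ p1) (k : ℕ), x ∈ (p1.take k).toFinset ↔ p1.idxOf x < k :=
        fun x hx k => by rw [List.mem_toFinset]; exact mem_take_iff_indexOf_lt hx k
      by_cases hwS : w ∈ S
      · by_cases hwT : w ∈ T
        · -- remove w from both
          have hcnt' : ∀ k, (T.erase w ∩ (p1.take k).toFinset).card ≤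
              (S.erase w ∩ (p1.take k).toFinset).card := by
            intro k
            have e1 : T.erase w ∩ (p1.take k).toFinset = (T ∩ (p1.take k).toFinset).erase w := by
              ext x; simp only [Finset.mem_inter, Finset.mem_erase]; tauto
            have e2 : S.erase w ∩ (p1.take k).toFinset = (S ∩ (p1.take k).toFinset).erase w := by
              ext x; simp only [Finset.mem_inter, Finset.mem_erase]; tauto
            rw [e1, e2]
            by_cases hwk : w ∈ (p1.take k).toFinset
            · rw [Finset.card_erase_of_mem (Finset.mem_inter.2 ⟨hwT, hwk⟩),
                Finset.card_erase_of_mem (Finset.mem_inter.2 ⟨hwS, hwk⟩)]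
              exact Nat.sub_le_sub_right (hcnt k) 1
            · rw [Finset.erase_eq_of_notMem (fun h => hwk (Finset.mem_inter.1 h).2),
                Finset.erase_eq_of_notMem (fun h => hwk (Finset.mem_inter.1 h).2)]
              exact hcnt k
          have hm : ((S.erase w) ∪ (T.erase w)).card ≤ n := by
            rw [← Finset.erase_union_distrib]
            have h1 : ((S ∪ T).erase w).card < (S ∪ T).card :=
              Finset.card_erase_lt_of_mem hwU
            omega
          obtain ⟨hle, hlt⟩ := ih (S.erase w) (T.erase w) hm
            ((Finset.erase_subset _ _).trans hSO) ((Finset.erase_subset _ _).trans hTO) hcnt'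
          have eS := Finset.sum_erase_add S u hwS
          have eT := Finset.sum_erase_add T u hwT
          constructor
          · rw [← eS, ← eT]; linarith
          · intro hne
            have : T.erase w ≠ S.erase w := by
              intro h
              apply hne
              rw [← Finset.insert_erase hwT, ← Finset.insert_erase hwS, h]
            have := hlt this
            rw [← eS, ← eT]; linarith
        · -- w ∈ S only: drop w from S
          have hTsub : ∀ t ∈ T, p1.idxOf t < p1.idxOf w := by
            intro t ht
            have h1 : p1.idxOf t ≤ p1.idxOf w := hwmax t (Finset.mem_union_right _ ht)
            have h2 : t ≠ w := fun h => hwT (h ▸ ht)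
            have := (List.idxOf_inj (hmem t (hTO ht)) (y := w)).not.2 h2
            omega
          have hTRw : T ∩ (p1.take (p1.idxOf w)).toFinset = T := by
            apply Finset.inter_eq_left.2
            intro t ht
            exact (hmemtake t (hmem t (hTO ht)) _).2 (hTsub t ht)
          have hwRw : w ∉ (p1.take (p1.idxOf w)).toFinset :=
            fun h => by have := (hmemtake w hwp1 _).1 h; omega
          have hTS1 : T.card ≤ S.card - 1 ∧ 1 ≤ S.card := by
            have := hcnt (p1.idxOf w)
            rw [hTRw] at this
            have hsub : S ∩ (p1.take (p1.idxOf w)).toFinset ⊆ S.erase w := by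
              intro x hx
              obtain ⟨h1, h2⟩ := Finset.mem_inter.1 hx
              exact Finset.mem_erase.2 ⟨fun he => hwRw (he ▸ h2), h1⟩
            have h3 := Finset.card_le_card hsub
            have h4 : (S.erase w).card = S.card - 1 := Finset.card_erase_of_mem hwS
            have h5 : 1 ≤ S.card := Finset.card_pos.2 ⟨w, hwS⟩
            omega
          have hcnt' : ∀ k, (T ∩ (p1.take k).toFinset).card ≤
              (S.erase w ∩ (p1.take k).toFinset).card := by
            intro k
            by_cases hwk : w ∈ (p1.take k).toFinset
            · have hSsub : S.erase w ⊆ (p1.take k).toFinset := by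
                intro s hs
                obtain ⟨hs1, hs2⟩ := Finset.mem_erase.1 hs
                have h1 : p1.idxOf s ≤ p1.idxOf w := hwmax s (Finset.mem_union_left _ hs2)
                have h2 := (List.idxOf_inj (hmem s (hSO hs2)) (y := w)).not.2 hs1
                have h3 := (hmemtake w hwp1 k).1 hwk
                exact (hmemtake s (hmem s (hSO hs2)) k).2 (by omega)
              rw [Finset.inter_eq_left.2 hSsub, Finset.card_erase_of_mem hwS]
              have := Finset.card_le_card
                (Finset.inter_subset_left (s₁ := T) (s₂ := (p1.take k).toFinset))
              omega
            · have e2 : S.erase w ∩ (p1.take k).toFinset = S ∩ (p1.take k).toFinset := by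
                ext x
                simp only [Finset.mem_inter, Finset.mem_erase]
                constructor
                · rintro ⟨⟨_, h1⟩, h2⟩; exact ⟨h1, h2⟩
                · rintro ⟨h1, h2⟩; exact ⟨⟨fun he => hwk (he ▸ h2), h1⟩, h2⟩
              rw [e2]
              exact hcnt k
          have hm : ((S.erase w) ∪ T).card ≤ n := by
            have hsub : (S.erase w) ∪ T ⊆ (S ∪ T).erase w := by
              intro x hx
              rcases Finset.mem_union.1 hx with h | h
              · obtain ⟨h1, h2⟩ := Finset.mem_erase.1 h
                exact Finset.mem_erase.2 ⟨h1, Finset.mem_union_left _ h2⟩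
              · exact Finset.mem_erase.2 ⟨fun he => hwT (he ▸ h), Finset.mem_union_right _ h⟩
            have h1 := Finset.card_le_card hsub
            have h2 : ((S ∪ T).erase w).card < (S ∪ T).card := Finset.card_erase_lt_of_mem hwU
            omega
          obtain ⟨hle, _⟩ := ih (S.erase w) T hm ((Finset.erase_subset _ _).trans hSO) hTO hcnt'
          have eS := Finset.sum_erase_add S u hwS
          have hwpos : 0 < u w := hu.1 w hwO
          refine ⟨by linarith, fun _ => by linarith⟩
      · -- w ∈ T only
        have hwT : w ∈ T := by
          rcases Finset.mem_union.1 hwU with h | h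
          · exact absurd h hwS
          · exact h
        have hSne : S.Nonempty := by
          rw [← Finset.card_pos]
          have h1 : 1 ≤ T.card := Finset.card_pos.2 ⟨w, hwT⟩
          omega
        obtain ⟨w', hw'S, hw'max⟩ := Finset.exists_max_image S (fun o => p1.idxOf o) hSne
        have hw'O : w' ∈ O := hSO hw'S
        have hw'p1 : w' ∈ p1 := hmem w' hw'O
        have hww' : p1.idxOf w' < p1.idxOf w := by
          have h1 : p1.idxOf w' ≤ p1.idxOf w := hwmax w' (Finset.mem_union_left _ hw'S)
          have h2 : w' ≠ w := fun h => hwS (h ▸ hw'S)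
          have := (List.idxOf_inj hw'p1 (y := w)).not.2 h2
          omega
        have huw : u w < u w' := (hu.2 w' hw'O w hwO).2 hww'
        have hcnt' : ∀ k, (T.erase w ∩ (p1.take k).toFinset).card ≤
            (S.erase w' ∩ (p1.take k).toFinset).card := by
          intro k
          by_cases hwk : w ∈ (p1.take k).toFinset
          · have hw'k : w' ∈ (p1.take k).toFinset := by
              have := (hmemtake w hwp1 k).1 hwk
              exact (hmemtake w' hw'p1 k).2 (by omega)
            have e1 : T.erase w ∩ (p1.take k).toFinset = (T ∩ (p1.take k).toFinset).erase w := by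
              ext x; simp only [Finset.mem_inter, Finset.mem_erase]; tauto
            have e2 : S.erase w' ∩ (p1.take k).toFinset =
                (S ∩ (p1.take k).toFinset).erase w' := by
              ext x; simp only [Finset.mem_inter, Finset.mem_erase]; tauto
            rw [e1, e2, Finset.card_erase_of_mem (Finset.mem_inter.2 ⟨hwT, hwk⟩),
              Finset.card_erase_of_mem (Finset.mem_inter.2 ⟨hw'S, hw'k⟩)]
            exact Nat.sub_le_sub_right (hcnt k) 1
          · by_cases hw'k : w' ∈ (p1.take k).toFinset
            · -- S is entirely inside the prefix
              have hSsub : S ⊆ (p1.take k).toFinset := by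
                intro s hs
                have h1 : p1.idxOf s ≤ p1.idxOf w' := hw'max s hs
                have h2 := (hmemtake w' hw'p1 k).1 hw'k
                exact (hmemtake s (hmem s (hSO hs)) k).2 (by omega)
              have e1 : T.erase w ∩ (p1.take k).toFinset = T ∩ (p1.take k).toFinset := by
                ext x
                simp only [Finset.mem_inter, Finset.mem_erase]
                constructor
                · rintro ⟨⟨_, h1⟩, h2⟩; exact ⟨h1, h2⟩
                · rintro ⟨h1, h2⟩; exact ⟨⟨fun he => hwk (he ▸ h2), h1⟩, h2⟩
              rw [e1]
              have hTk : T ∩ (p1.take k).toFinset ⊆ T.erase w := by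
                intro x hx
                obtain ⟨h1, h2⟩ := Finset.mem_inter.1 hx
                exact Finset.mem_erase.2 ⟨fun he => hwk (he ▸ h2), h1⟩
              have h3 := Finset.card_le_card hTk
              have h4 : (T.erase w).card = T.card - 1 := Finset.card_erase_of_mem hwT
              have h5 : S.erase w' ∩ (p1.take k).toFinset = S.erase w' := by
                apply Finset.inter_eq_left.2
                exact (Finset.erase_subset _ _).trans hSsub
              rw [h5, Finset.card_erase_of_mem hw'S]
              have h6 : 1 ≤ T.card := Finset.card_pos.2 ⟨w, hwT⟩
              omega
            · have e1 : T.erase w ∩ (p1.take k).toFinset = T ∩ (p1.take k).toFinset := by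
                ext x
                simp only [Finset.mem_inter, Finset.mem_erase]
                constructor
                · rintro ⟨⟨_, h1⟩, h2⟩; exact ⟨h1, h2⟩
                · rintro ⟨h1, h2⟩; exact ⟨⟨fun he => hwk (he ▸ h2), h1⟩, h2⟩
              have e2 : S.erase w' ∩ (p1.take k).toFinset = S ∩ (p1.take k).toFinset := by
                ext x
                simp only [Finset.mem_inter, Finset.mem_erase]
                constructor
                · rintro ⟨⟨_, h1⟩, h2⟩; exact ⟨h1, h2⟩
                · rintro ⟨h1, h2⟩; exact ⟨⟨fun he => hw'k (he ▸ h2), h1⟩, h2⟩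
              rw [e1, e2]
              exact hcnt k
        have hm : ((S.erase w') ∪ (T.erase w)).card ≤ n := by
          have hsub : (S.erase w') ∪ (T.erase w) ⊆ (S ∪ T).erase w := by
            intro x hx
            rcases Finset.mem_union.1 hx with h | h
            · obtain ⟨_, h2⟩ := Finset.mem_erase.1 h
              exact Finset.mem_erase.2 ⟨fun he => hwS (he ▸ h2), Finset.mem_union_left _ h2⟩
            · obtain ⟨h1, h2⟩ := Finset.mem_erase.1 h
              exact Finset.mem_erase.2 ⟨h1, Finset.mem_union_right _ h2⟩
          have h1 := Finset.card_le_card hsub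
          have h2 : ((S ∪ T).erase w).card < (S ∪ T).card := Finset.card_erase_lt_of_mem hwU
          omega
        obtain ⟨hle, _⟩ := ih (S.erase w') (T.erase w) hm
          ((Finset.erase_subset _ _).trans hSO) ((Finset.erase_subset _ _).trans hTO) hcnt'
        have eS := Finset.sum_erase_add S u hw'S
        have eT := Finset.sum_erase_add T u hwT
        refine ⟨by linarith, fun _ => by linarith⟩
end

section
variable {I : Type*} [DecidableEq I]
open SAux

lemma qstar_report {O : Finset I} {p2 : List I} (hp2 : IsReport O p2) (S : Finset I) :
    IsReport O (p2.filter (fun o => decide (o ∈ S)) ++ p2.filter (fun o => decide (o ∉ S))) := by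
  constructor
  · refine List.Nodup.append (hp2.1.filter _) (hp2.1.filter _) ?_
    intro x hx1 hx2
    have h1 := (List.mem_filter.1 hx1).2
    have h2 := (List.mem_filter.1 hx2).2
    simp at h1 h2
    exact h2 h1
  · intro o
    rw [List.mem_append, List.mem_filter, List.mem_filter, ← hp2.2 o]
    by_cases h : o ∈ S <;> simp [h]

theorem statement7' {O : Finset I} {π : List (Fin 2)} (hπ : π.length = O.card)
    {p2 : List I} (hp2 : IsReport O p2)
    {p1 : List I} (hp1 : IsReport O p1)
    {q : List I} (hq : IsReport O q) :
    (∃ u : I → ℝ, Consistent O p1 u ∧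
      ∀ q' : List I, IsReport O q' →
        ∑ o ∈ alloc2 q' p2 π O 0, u o ≤ ∑ o ∈ alloc2 q p2 π O 0, u o) ↔
    (∀ u : I → ℝ, Consistent O p1 u →
      ∀ q' : List I, IsReport O q' →
        ∑ o ∈ alloc2 q' p2 π O 0, u o ≤ ∑ o ∈ alloc2 q p2 π O 0, u o) := by
  classical
  have hπle : π.length ≤ O.card := le_of_eq hπ
  have htF1 : p1.toFinset = O := report_toFinset hp1
  have hlen1 : p1.length = O.card := report_length hp1
  have hlen2 : p2.length = O.card := report_length hp2
  -- properties of every actual allocation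
  have hallocP : ∀ q' : List I, IsReport O q' →
      alloc2 q' p2 π O 0 ⊆ O ∧ (alloc2 q' p2 π O 0).card = π.count 0 ∧
        FeasTop p2 π (alloc2 q' p2 π O 0) := by
    intro q' hq'
    obtain ⟨h1, h2, h3⟩ := sound O p2 hp2 q' hq' π O (Finset.Subset.refl O) hπle
    exact ⟨h1, h2, (feasTop_iff hp2 π _).1 h3⟩
  -- the greedy optimum
  set Sstar := greedyAux p2 π p1 ∅ with hSstar
  have hSsub : Sstar ⊆ O := by
    refine (greedy_subset_union p2 π p1 ∅).trans ?_
    rw [Finset.empty_union, htF1]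
  have hchkS : chk p2 π Sstar := greedy_chk p2 π p1 ∅ (by intro k _; simp [zcount])
  have hfS : FeasTop p2 π Sstar := (chk_iff hp2 hπ hSsub).1 hchkS
  have hScard : Sstar.card = π.count 0 := by
    have hub : Sstar.card ≤ π.count 0 := by
      have := hfS p2.length
      rw [List.take_of_length_le le_rfl, report_toFinset hp2,
        Finset.inter_eq_left.2 hSsub, zcount_of_le π (by omega)] at this
      exact this
    have hlb : π.count 0 ≤ Sstar.card := by
      obtain ⟨hA1, hA2, hA3⟩ := hallocP q hq
      have := counting hp2 hπ hp1 hA1 hA3 p1.length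
      rw [List.take_of_length_le le_rfl, htF1, Finset.inter_eq_left.2 hA1,
        Finset.inter_eq_left.2 hSsub, hA2] at this
      exact this
    omega
  -- realize Sstar by a report
  set qstar := p2.filter (fun o => decide (o ∈ Sstar)) ++ p2.filter (fun o => decide (o ∉ Sstar))
    with hqstar
  have hqstarR : IsReport O qstar := qstar_report hp2 Sstar
  have hreal : alloc2 qstar p2 π O 0 = Sstar := by
    have hint : Sstar ∩ O = Sstar := Finset.inter_eq_left.2 hSsub
    have hc := complete O p2 hp2 Sstar π O (Finset.Subset.refl O) hπle
      (by rw [hint, hScard]) (by rw [hint]; exact (feasTop_iff hp2 π _).2 hfS)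
    rw [hint] at hc
    rw [← hqstar] at hc
    obtain ⟨_, hA2, _⟩ := hallocP qstar hqstarR
    exact (Finset.eq_of_subset_of_card_le hc (by omega)).symm
  -- counting dominance of Sstar over any allocation
  have hdom : ∀ q' : List I, IsReport O q' → ∀ u : I → ℝ, Consistent O p1 u →
      ∑ o ∈ alloc2 q' p2 π O 0, u o ≤ ∑ o ∈ Sstar, u o ∧
        (alloc2 q' p2 π O 0 ≠ Sstar → ∑ o ∈ alloc2 q' p2 π O 0, u o < ∑ o ∈ Sstar, u o) := by
    intro q' hq' u hu
    obtain ⟨hA1, hA2, hA3⟩ := hallocP q' hq'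
    exact sum_dom hp1 hu ((Sstar ∪ alloc2 q' p2 π O 0).card) Sstar (alloc2 q' p2 π O 0)
      le_rfl hSsub hA1 (counting hp2 hπ hp1 hA1 hA3)
  constructor
  · rintro ⟨u₀, hu₀, hbest⟩ u hu q' hq'
    -- the allocation under q must BE Sstar
    have h1 : ∑ o ∈ Sstar, u₀ o ≤ ∑ o ∈ alloc2 q p2 π O 0, u₀ o := by
      have := hbest qstar hqstarR
      rw [hreal] at this
      exact this
    have h2 := hdom q hq u₀ hu₀
    have heq : alloc2 q p2 π O 0 = Sstar := by
      by_contra hne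
      have := h2.2 hne
      linarith
    rw [heq]
    exact (hdom q' hq' u hu).1
  · intro hall
    set u₀ : I → ℝ := fun o => (p1.length : ℝ) - (p1.idxOf o : ℝ) with hu₀def
    have hu₀ : Consistent O p1 u₀ := by
      constructor
      · intro o ho
        have : p1.idxOf o < p1.length := List.idxOf_lt_length_iff.2 ((hp1.2 o).2 ho)
        have : (p1.idxOf o : ℝ) < (p1.length : ℝ) := by exact_mod_cast this
        rw [hu₀def]
        simp only
        linarith
      · intro o _ o' _
        rw [hu₀def]
        simp only
        constructor
        · intro h
          have : (p1.idxOf o : ℝ) < (p1.idxOf o' : ℝ) := by linarith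
          exact_mod_cast this
        · intro h
          have : (p1.idxOf o : ℝ) < (p1.idxOf o' : ℝ) := by exact_mod_cast h
          linarith
    exact ⟨u₀, hu₀, hall u₀ hu₀⟩
end


/-- A report `q` of agent 1 is a best response with respect to
SOME additive utility consistent with ≻₁ (the true ranking `p1`) if and only if
it is a best response with respect to EVERY additive utility consistent with ≻₁. -/
theorem statement7 {I : Type*} [DecidableEq I]
    (O : Finset I) (π : List (Fin 2)) (hπ : π.length = O.card)
    (p2 : List I) (hp2 : IsReport O p2)
    (p1 : List I) (hp1 : IsReport O p1)  -- agent 1's true preference ≻₁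
    (q : List I) (hq : IsReport O q) :
    (∃ u : I → ℝ, Consistent O p1 u ∧
      ∀ q' : List I, IsReport O q' →
        ∑ o ∈ alloc2 q' p2 π O 0, u o ≤ ∑ o ∈ alloc2 q p2 π O 0, u o) ↔
    (∀ u : I → ℝ, Consistent O p1 u →
      ∀ q' : List I, IsReport O q' →
        ∑ o ∈ alloc2 q' p2 π O 0, u o ≤ ∑ o ∈ alloc2 q p2 π O 0, u o) := by
  exact statement7' hπ hp2 hp1 hq
end

section
/- In the fixed 3-agent instance: (1) under the truthful report a ≻ b ≻ c ≻ d, agent 1's allocation is {a, d}; (2) under the report c ≻ b ≻ a ≻ d, agent 1's allocation is {b, c}; (3) there is no report of agent 1 under which agent 1's allocation contains both a and b; (4) there is no report of agent 1 under which agent 1's allocation contains both a and c. -/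
/-- Three-agent sequential allocation: agents `0, 1, 2` ("agents 1, 2, 3")
report the ranking lists `p1, p2, p3` respectively. -/
def alloc3 {I : Type*} [DecidableEq I] (p1 p2 p3 : List I)
    (π : List (Fin 3)) (O : Finset I) : Fin 3 → Finset I :=
  seqAlloc (fun ag => if ag = 0 then p1 else if ag = 1 then p2 else p3) π O

namespace FixedInstance

/-- Item `a`. -/
def a : Fin 4 := 0
/-- Item `b`. -/
def b : Fin 4 := 1
/-- Item `c`. -/
def c : Fin 4 := 2
/-- Item `d`. -/
def d : Fin 4 := 3

/-- Agent 1's true preference: `a ≻₁ b ≻₁ c ≻₁ d`. -/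
def pref1 : List (Fin 4) := [a, b, c, d]

/-- Agent 2's (truthful) report: `c ≻₂ d ≻₂ a ≻₂ b`. -/
def pref2 : List (Fin 4) := [c, d, a, b]

/-- Agent 3's (truthful) report: `a ≻₃ b ≻₃ c ≻₃ d`. -/
def pref3 : List (Fin 4) := [a, b, c, d]

/-- The picking sequence `1, 2, 3, 1`. -/
def pick : List (Fin 3) := [0, 1, 2, 0]

/-- The item set `O = {a, b, c, d}`. -/
def items : Finset (Fin 4) := Finset.univ

end FixedInstance

def allPerms : List (List (Fin 4)) := [[0, 1, 2, 3],
    [0, 1, 3, 2],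
    [0, 2, 1, 3],
    [0, 2, 3, 1],
    [0, 3, 1, 2],
    [0, 3, 2, 1],
    [1, 0, 2, 3],
    [1, 0, 3, 2],
    [1, 2, 0, 3],
    [1, 2, 3, 0],
    [1, 3, 0, 2],
    [1, 3, 2, 0],
    [2, 0, 1, 3],
    [2, 0, 3, 1],
    [2, 1, 0, 3],
    [2, 1, 3, 0],
    [2, 3, 0, 1],
    [2, 3, 1, 0],
    [3, 0, 1, 2],
    [3, 0, 2, 1],
    [3, 1, 0, 2],
    [3, 1, 2, 0],
    [3, 2, 0, 1],
    [3, 2, 1, 0]]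

open FixedInstance in
/-- In the fixed 3-agent instance (picking sequence `1,2,3,1`;
agent 2 reports `c ≻ d ≻ a ≻ b`; agent 3 reports `a ≻ b ≻ c ≻ d`):
(1) under the truthful report `a ≻ b ≻ c ≻ d`, agent 1's allocation is `{a, d}`;
(2) under the report `c ≻ b ≻ a ≻ d`, agent 1's allocation is `{b, c}`;
(3) no report of agent 1 gives agent 1 both `a` and `b`;
(4) no report of agent 1 gives agent 1 both `a` and `c`. -/
theorem statement8 :
    alloc3 [a, b, c, d] pref2 pref3 pick items 0 = {a, d} ∧
    alloc3 [c, b, a, d] pref2 pref3 pick items 0 = {b, c} ∧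
    (¬ ∃ p1 : List (Fin 4), IsReport items p1 ∧
        {a, b} ⊆ alloc3 p1 pref2 pref3 pick items 0) ∧
    (¬ ∃ p1 : List (Fin 4), IsReport items p1 ∧
        {a, c} ⊆ alloc3 p1 pref2 pref3 pick items 0) := by
  have key : ∀ p1 : List (Fin 4), IsReport items p1 →
      p1 ∈ allPerms := by
    intro p1 ⟨hn, hm⟩
    have hp : List.Perm p1 [0,1,2,3] := by
      apply List.perm_of_nodup_nodup_toFinset_eq hn (by decide)
      apply Finset.ext
      intro o
      fin_cases o <;> simp [List.mem_toFinset, hm, items]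
    have h4 : p1.length = 4 := hp.length_eq
    match p1, h4 with
    | [w,x,y,z], _ =>
      clear hp hm
      fin_cases w <;> fin_cases x <;> fin_cases y <;> fin_cases z <;> revert hn <;> decide
  have h3 : ∀ p ∈ allPerms,
      ¬ {a, b} ⊆ alloc3 p pref2 pref3 pick items 0 := by decide
  have h4 : ∀ p ∈ allPerms,
      ¬ {a, c} ⊆ alloc3 p pref2 pref3 pick items 0 := by decide
  refine ⟨by decide, by decide, ?_, ?_⟩
  · rintro ⟨p1, hr, hs⟩
    exact h3 p1 (key p1 hr) hs
  · rintro ⟨p1, hr, hs⟩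
    exact h4 p1 (key p1 hr) hs
end
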